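/- On e(3)*, the two Clebsch Hamiltonians I₁ = (1/2)⟨m,m⟩ - (1/2)⟨a, B₁a⟩ and I₂ = (1/2)⟨m, Am⟩ - (1/2)⟨a, B₂a⟩, with B₁ = diag(0, k², k² - 1), B₂ = diag(0, 0, k² - 1), A = diag(1 - k², 1, 0) for a real parameter k, are in involution with respect to the e(3)* Lie–Poisson bracket: {I₁, I₂} = 0. -/

import Mathlib

open Matrix

/-- Gradient with respect to the variable `m`. -/
noncomputable def gradM (F : (Fin 3 → ℝ) × (Fin 3 → ℝ) → ℝ)
    (z : (Fin 3 → ℝ) × (Fin 3 → ℝ)) : Fin 3 → ℝ :=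
  fun α => fderiv ℝ F z (Pi.single α 1, 0)

/-- Gradient with respect to the variable `a`. -/
noncomputable def gradA (F : (Fin 3 → ℝ) × (Fin 3 → ℝ) → ℝ)
    (z : (Fin 3 → ℝ) × (Fin 3 → ℝ)) : Fin 3 → ℝ :=
  fun α => fderiv ℝ F z (0, Pi.single α 1)

/-- The `e(3)*` Lie–Poisson bracket on `ℝ³ × ℝ³` (variables `(m, a)`). -/
noncomputable def e3Bracket (F G : (Fin 3 → ℝ) × (Fin 3 → ℝ) → ℝ)
    (z : (Fin 3 → ℝ) × (Fin 3 → ℝ)) : ℝ :=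
  -(z.1 ⬝ᵥ (gradM F z ⨯₃ gradM G z)) - z.2 ⬝ᵥ (gradM F z ⨯₃ gradA G z) -
    z.2 ⬝ᵥ (gradA F z ⨯₃ gradM G z)

section aux

/-- projection onto first-component coordinate i, as a CLM -/
noncomputable def P1 (i : Fin 3) : ((Fin 3 → ℝ) × (Fin 3 → ℝ)) →L[ℝ] ℝ :=
  (ContinuousLinearMap.proj i).comp (ContinuousLinearMap.fst ℝ (Fin 3 → ℝ) (Fin 3 → ℝ))

noncomputable def P2 (i : Fin 3) : ((Fin 3 → ℝ) × (Fin 3 → ℝ)) →L[ℝ] ℝ :=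
  (ContinuousLinearMap.proj i).comp (ContinuousLinearMap.snd ℝ (Fin 3 → ℝ) (Fin 3 → ℝ))

lemma hasFDerivAt_quad (c d : Fin 3 → ℝ) (z : (Fin 3 → ℝ) × (Fin 3 → ℝ)) :
    HasFDerivAt (fun w : (Fin 3 → ℝ) × (Fin 3 → ℝ) =>
      (∑ i, (1/2 : ℝ) * c i * (w.1 i * w.1 i)) - ∑ i, (1/2 : ℝ) * d i * (w.2 i * w.2 i))
      ((∑ i, (c i * z.1 i) • P1 i) - ∑ i, (d i * z.2 i) • P2 i) z := by
  apply HasFDerivAt.sub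
  · apply HasFDerivAt.fun_sum
    intro i _
    have h1 : HasFDerivAt (fun w : (Fin 3 → ℝ) × (Fin 3 → ℝ) => w.1 i) (P1 i) z :=
      (P1 i).hasFDerivAt
    have := ((h1.mul h1).const_mul ((1/2 : ℝ) * c i))
    convert this using 1
    · rfl
    · rfl
    refine ContinuousLinearMap.ext fun v => ?_
    simp [P1, ContinuousLinearMap.smul_apply]
    ring
  · apply HasFDerivAt.fun_sum
    intro i _
    have h1 : HasFDerivAt (fun w : (Fin 3 → ℝ) × (Fin 3 → ℝ) => w.2 i) (P2 i) z :=
      (P2 i).hasFDerivAt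
    have := ((h1.mul h1).const_mul ((1/2 : ℝ) * d i))
    convert this using 1
    · rfl
    · rfl
    refine ContinuousLinearMap.ext fun v => ?_
    simp [P2, ContinuousLinearMap.smul_apply]
    ring

lemma grads (c d : Fin 3 → ℝ)
    (F : (Fin 3 → ℝ) × (Fin 3 → ℝ) → ℝ)
    (hF : F = fun w => (1/2 : ℝ) * (w.1 ⬝ᵥ (Matrix.diagonal c *ᵥ w.1)) -
      (1/2 : ℝ) * (w.2 ⬝ᵥ (Matrix.diagonal d *ᵥ w.2)))
    (z : (Fin 3 → ℝ) × (Fin 3 → ℝ)) :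
    gradM F z = (fun α => c α * z.1 α) ∧ gradA F z = (fun α => -(d α * z.2 α)) := by
  have hFeq : F = fun w : (Fin 3 → ℝ) × (Fin 3 → ℝ) =>
      (∑ i, (1/2 : ℝ) * c i * (w.1 i * w.1 i)) - ∑ i, (1/2 : ℝ) * d i * (w.2 i * w.2 i) := by
    rw [hF]; funext w
    simp [dotProduct, mulVec_diagonal, Finset.mul_sum]
    congr 1 <;> exact Finset.sum_congr rfl fun i _ => by ring
  have hd := hasFDerivAt_quad c d z
  rw [← hFeq] at hd
  have hfd := hd.fderiv
  constructor <;> funext α <;>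
    simp [gradM, gradA, hfd, P1, P2, ContinuousLinearMap.sum_apply,
      ContinuousLinearMap.smul_apply, Pi.single_apply, Finset.mul_sum]

end aux


/-- The Clebsch Hamiltonians `I₁ = (1/2)⟨m,m⟩ - (1/2)⟨a,B₁a⟩` and
`I₂ = (1/2)⟨m,Am⟩ - (1/2)⟨a,B₂a⟩` with `B₁ = diag(0,k²,k²-1)`,
`B₂ = diag(0,0,k²-1)`, `A = diag(1-k²,1,0)` are in involution. -/
theorem clebsch_involution (k : ℝ) (z : (Fin 3 → ℝ) × (Fin 3 → ℝ)) :
    e3Bracket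
      (fun z => (1 / 2 : ℝ) * (z.1 ⬝ᵥ z.1) -
        (1 / 2 : ℝ) * (z.2 ⬝ᵥ (Matrix.diagonal ![0, k ^ 2, k ^ 2 - 1] *ᵥ z.2)))
      (fun z => (1 / 2 : ℝ) * (z.1 ⬝ᵥ (Matrix.diagonal ![1 - k ^ 2, 1, 0] *ᵥ z.1)) -
        (1 / 2 : ℝ) * (z.2 ⬝ᵥ (Matrix.diagonal ![0, 0, k ^ 2 - 1] *ᵥ z.2)))
      z = 0 := by
  obtain ⟨hM1, hA1⟩ := grads ![1,1,1] ![0, k ^ 2, k ^ 2 - 1]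
    (fun z => (1 / 2 : ℝ) * (z.1 ⬝ᵥ z.1) -
      (1 / 2 : ℝ) * (z.2 ⬝ᵥ (Matrix.diagonal ![0, k ^ 2, k ^ 2 - 1] *ᵥ z.2)))
    (by
      funext w
      congr 2
      simp [dotProduct, mulVec_diagonal, Fin.sum_univ_three]) z
  obtain ⟨hM2, hA2⟩ := grads ![1 - k ^ 2, 1, 0] ![0, 0, k ^ 2 - 1] _ rfl z
  simp only [e3Bracket, hM1, hA1, hM2, hA2]
  simp [crossProduct, dotProduct, Fin.sum_univ_three]
  ring
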